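/- For the ASVD1 method with parameters ε > 0 and c > 0, i.e., Λ = {n : σₙ > ε and |⟨y,vₙ⟩|/σₙ ≤ c‖y‖}, the error satisfies ‖f − P_Λ f‖ ≤ ‖f − T_N z‖ + max{√ε, ‖f − T_N z‖/(c‖y‖ − ‖z‖)} ‖z‖ for every z ∈ ℂᴺ with ‖z‖ < c‖y‖. -/

import Mathlib

open scoped ComplexInnerProductSpace
open ComplexConjugate

set_option maxHeartbeats 2000000 in
theorem stmt_10 {H : Type*} [NormedAddCommGroup H] [InnerProductSpace ℂ H]
    {N : ℕ} (φ : Fin N → H) (σ : Fin N → ℝ)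
    (v : Fin N → EuclideanSpace ℂ (Fin N)) (hv : Orthonormal ℂ v)
    (G : Matrix (Fin N) (Fin N) ℂ) (hG : ∀ m k, G m k = ⟪φ m, φ k⟫)
    (heig : ∀ n i, G.mulVec (fun j => v n j) i = (σ n : ℂ) * v n i)
    (T : EuclideanSpace ℂ (Fin N) → H) (hT : ∀ z, T z = ∑ n, z n • φ n)
    (ξ : Fin N → H) (hξ : ∀ n, ξ n = T (v n))
    (hσ : ∀ n, 0 ≤ σ n) (ε c : ℝ) (hε : 0 < ε) (hc : 0 < c)
    (f : H) (y : EuclideanSpace ℂ (Fin N)) (hy : ∀ n, y n = ⟪φ n, f⟫)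
    (z : EuclideanSpace ℂ (Fin N)) (hz : ‖z‖ < c * ‖y‖) :
    ‖f - ∑ n ∈ Finset.univ.filter (fun n => ε < σ n ∧ ‖⟪v n, y⟫‖ / σ n ≤ c * ‖y‖),
        (⟪ξ n, f⟫ / (σ n : ℂ)) • ξ n‖ ≤
      ‖f - T z‖ + max (Real.sqrt ε) (‖f - T z‖ / (c * ‖y‖ - ‖z‖)) * ‖z‖ := by
  classical
  rcases Nat.eq_zero_or_pos N with hN | hN
  · subst hN
    have hz0 : z = 0 := Subsingleton.elim z 0
    rw [hT]
    simp [hz0]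
  -- main case
  have hNe : Nonempty (Fin N) := Fin.pos_iff_nonempty.mp hN
  -- key inner product identities
  have hξf : ∀ n, ⟪ξ n, f⟫ = ⟪v n, y⟫ := by
    intro n
    rw [hξ, hT, sum_inner, PiLp.inner_apply]
    refine Finset.sum_congr rfl fun k _ => ?_
    rw [inner_smul_left, hy k, RCLike.inner_apply, mul_comm]
  have hξT : ∀ n (b : EuclideanSpace ℂ (Fin N)), ⟪ξ n, T b⟫ = (σ n : ℂ) * ⟪v n, b⟫ := by
    intro n b
    have hbv : ⟪T b, T (v n)⟫ = (σ n : ℂ) * ⟪b, v n⟫ := by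
      rw [hT b, hT (v n), sum_inner]
      have hterm : ∀ m, ⟪b m • φ m, ∑ k, v n k • φ k⟫ = conj (b m) * ((σ n : ℂ) * v n m) := by
        intro m
        rw [inner_smul_left, inner_sum]
        congr 1
        have h := heig n m
        rw [Matrix.mulVec, dotProduct] at h
        rw [← h]
        refine Finset.sum_congr rfl fun k _ => ?_
        rw [inner_smul_right, hG m k, mul_comm]
      simp_rw [hterm]
      rw [PiLp.inner_apply, Finset.mul_sum]
      refine Finset.sum_congr rfl fun m _ => ?_
      rw [RCLike.inner_apply]
      ring
    rw [hξ, ← inner_conj_symm, hbv, map_mul, Complex.conj_ofReal, inner_conj_symm]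
  have hξξ : ∀ n m, ⟪ξ n, ξ m⟫ = if n = m then (σ n : ℂ) else 0 := by
    intro n m
    rw [hξ m, hξT n (v m)]
    rw [orthonormal_iff_ite.mp hv n m]
    by_cases h : n = m <;> simp [h]
  -- T is linear on expansions in v
  have hTlin : ∀ cc : Fin N → ℂ, T (∑ n, cc n • v n) = ∑ n, cc n • ξ n := by
    intro cc
    rw [hT]
    have hcoord : ∀ k, (∑ n, cc n • v n : EuclideanSpace ℂ (Fin N)) k = ∑ n, cc n * v n k := by
      intro k
      induction (Finset.univ : Finset (Fin N)) using Finset.induction with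
      | empty => rfl
      | insert _ _ h ih => simp [Finset.sum_insert h, ih]
    calc ∑ k, (∑ n, cc n • v n : EuclideanSpace ℂ (Fin N)) k • φ k
        = ∑ k, ∑ n, (cc n * v n k) • φ k := by
          refine Finset.sum_congr rfl fun k _ => ?_
          rw [hcoord k, Finset.sum_smul]
      _ = ∑ n, ∑ k, (cc n * v n k) • φ k := Finset.sum_comm
      _ = ∑ n, cc n • ξ n := by
          refine Finset.sum_congr rfl fun n _ => ?_
          rw [hξ, hT, Finset.smul_sum]
          refine Finset.sum_congr rfl fun k _ => ?_
          rw [mul_smul]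
  -- expansion of z
  set a : Fin N → ℂ := fun n => ⟪v n, z⟫ with ha
  have hza : z = ∑ n, a n • v n := by
    have card : Fintype.card (Fin N) = Module.finrank ℂ (EuclideanSpace ℂ (Fin N)) := by simp
    let b : Module.Basis (Fin N) ℂ (EuclideanSpace ℂ (Fin N)) := basisOfOrthonormalOfCardEqFinrank hv card
    have hb : ⇑b = v := coe_basisOfOrthonormalOfCardEqFinrank hv card
    let onb := b.toOrthonormalBasis (hb ▸ hv)
    have honb : ⇑onb = v := by rw [show ⇑onb = ⇑b from Module.Basis.coe_toOrthonormalBasis b _, hb]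
    have := onb.sum_repr' z
    rw [honb] at this
    exact this.symm
  have hTz : T z = ∑ n, a n • ξ n := by
    conv_lhs => rw [hza]
    exact hTlin a
  have habd : ∀ n, ‖a n‖ ≤ ‖z‖ := by
    intro n
    calc ‖a n‖ = ‖⟪v n, z⟫‖ := rfl
      _ ≤ ‖v n‖ * ‖z‖ := norm_inner_le_norm _ _
      _ = ‖z‖ := by rw [hv.1 n, one_mul]
  set Λ : Finset (Fin N) :=
    Finset.univ.filter (fun n => ε < σ n ∧ ‖⟪v n, y⟫‖ / σ n ≤ c * ‖y‖) with hΛ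
  set P : H := ∑ n ∈ Λ, (⟪ξ n, f⟫ / (σ n : ℂ)) • ξ n with hP
  set w : H := ∑ n ∈ Λ, a n • ξ n with hw
  set S : ℝ := ‖f - T z‖ with hS
  set D : ℝ := c * ‖y‖ - ‖z‖ with hD
  have hDpos : 0 < D := by rw [hD]; linarith
  set M : ℝ := max (Real.sqrt ε) (S / D) with hM
  have hM0 : 0 ≤ M := le_trans (Real.sqrt_nonneg ε) (le_max_left _ _)
  -- Step 1 : ‖f - P‖ ≤ ‖f - w‖
  have horth : ∀ n ∈ Λ, ⟪ξ n, f - P⟫ = 0 := by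
    intro n hn
    have hσn : (0:ℝ) < σ n := lt_trans hε (Finset.mem_filter.mp hn).2.1
    have hσnC : (σ n : ℂ) ≠ 0 := by
      exact_mod_cast Complex.ofReal_ne_zero.mpr (ne_of_gt hσn)
    rw [inner_sub_right, hP, inner_sum]
    have : ∑ m ∈ Λ, ⟪ξ n, (⟪ξ m, f⟫ / (σ m : ℂ)) • ξ m⟫ = ⟪ξ n, f⟫ := by
      rw [Finset.sum_eq_single n]
      · rw [inner_smul_right, hξξ n n, if_pos rfl]
        field_simp
      · intro m hm hmn
        rw [inner_smul_right, hξξ n m, if_neg (fun h => hmn h.symm), mul_zero]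
      · intro h; exact absurd hn h
    rw [this, sub_self]
  have hstep1 : ‖f - P‖ ≤ ‖f - w‖ := by
    have hPw : ⟪P - w, f - P⟫ = 0 := by
      rw [hP, hw, ← Finset.sum_sub_distrib, sum_inner]
      refine Finset.sum_eq_zero fun n hn => ?_
      rw [← sub_smul, inner_smul_left, horth n hn, mul_zero]
    have hre : RCLike.re ⟪f - P, P - w⟫ = 0 := by
      rw [← inner_conj_symm, hPw]
      simp
    have hsq : ‖f - P‖ ^ 2 ≤ ‖f - w‖ ^ 2 := by
      have hdecomp : f - w = (f - P) + (P - w) := by abel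
      rw [hdecomp, @norm_add_sq ℂ _ _ _ _ (f - P) (P - w), hre]
      nlinarith [sq_nonneg ‖P - w‖]
    calc ‖f - P‖ = Real.sqrt (‖f - P‖ ^ 2) := (Real.sqrt_sq (norm_nonneg _)).symm
      _ ≤ Real.sqrt (‖f - w‖ ^ 2) := Real.sqrt_le_sqrt hsq
      _ = ‖f - w‖ := Real.sqrt_sq (norm_nonneg _)
  -- Step 2 : pointwise bound on σ n for n ∉ Λ
  have hkey : ∀ n ∉ Λ, σ n * ‖a n‖ ^ 2 ≤ M ^ 2 * ‖a n‖ ^ 2 := by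
    intro n hn
    have hcond : ¬(ε < σ n ∧ ‖⟪v n, y⟫‖ / σ n ≤ c * ‖y‖) := by
      intro h
      exact hn (Finset.mem_filter.mpr ⟨Finset.mem_univ n, h⟩)
    have hσM : σ n ≤ M ^ 2 := by
      by_cases hεn : ε < σ n
      · -- big singular value, but large coefficient
        have hσn : (0:ℝ) < σ n := lt_trans hε hεn
        have hbig : c * ‖y‖ < ‖⟪v n, y⟫‖ / σ n := lt_of_not_ge fun h => hcond ⟨hεn, h⟩
        have hbig' : σ n * (c * ‖y‖) < ‖⟪v n, y⟫‖ := by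
          rw [lt_div_iff₀ hσn] at hbig
          linarith [hbig]
        have hξnorm : ‖ξ n‖ ^ 2 = σ n := by
          have := hξξ n n
          rw [if_pos rfl] at this
          have h2 : ⟪ξ n, ξ n⟫ = (σ n : ℂ) := this
          rw [@norm_sq_eq_re_inner ℂ, h2]
          simp
        have hi : ⟪ξ n, f - T z⟫ = ⟪v n, y⟫ - (σ n : ℂ) * a n := by
          rw [inner_sub_right, hξf n, hξT n z]
        have hlow : σ n * D ≤ ‖⟪ξ n, f - T z⟫‖ := by
          rw [hi]
          have h1 : ‖⟪v n, y⟫‖ - ‖(σ n : ℂ) * a n‖ ≤ ‖⟪v n, y⟫ - (σ n : ℂ) * a n‖ :=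
            norm_sub_norm_le _ _
          have h2 : ‖(σ n : ℂ) * a n‖ ≤ σ n * ‖z‖ := by
            rw [norm_mul, Complex.norm_real, Real.norm_of_nonneg (hσ n)]
            exact mul_le_mul_of_nonneg_left (habd n) (hσ n)
          rw [hD]
          nlinarith [hbig', h1, h2]
        have hup : ‖⟪ξ n, f - T z⟫‖ ≤ ‖ξ n‖ * S := norm_inner_le_norm _ _
        have hchain : σ n * D ≤ ‖ξ n‖ * S := le_trans hlow hup
        have hsq2 : σ n * D ^ 2 ≤ S ^ 2 := by
          have hS0 : 0 ≤ S := norm_nonneg _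
          have hξ0 : 0 ≤ ‖ξ n‖ := norm_nonneg _
          have hD0 : 0 ≤ σ n * D := le_of_lt (mul_pos hσn hDpos)
          have hsq := mul_self_le_mul_self hD0 hchain
          have h5 : σ n * (σ n * D ^ 2) ≤ σ n * S ^ 2 := by nlinarith [hsq, hξnorm]
          exact le_of_mul_le_mul_left h5 hσn
        have hσSD : σ n ≤ (S / D) ^ 2 := by
          rw [div_pow, le_div_iff₀ (pow_pos hDpos 2)]
          exact hsq2
        refine le_trans hσSD ?_
        have hSD0 : 0 ≤ S / D := div_nonneg (norm_nonneg _) (le_of_lt hDpos)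
        exact pow_le_pow_left₀ hSD0 (le_max_right _ _) 2
      · -- small singular value
        have hσε : σ n ≤ ε := le_of_not_gt hεn
        have : σ n ≤ Real.sqrt ε ^ 2 := by
          rw [Real.sq_sqrt (le_of_lt hε)]
          exact hσε
        refine le_trans this ?_
        exact pow_le_pow_left₀ (Real.sqrt_nonneg ε) (le_max_left _ _) 2
    exact mul_le_mul_of_nonneg_right hσM (sq_nonneg _)
  -- norm of orthogonal sums
  have hnormsum : ∀ s : Finset (Fin N), ‖∑ n ∈ s, a n • ξ n‖ ^ 2 = ∑ n ∈ s, σ n * ‖a n‖ ^ 2 := by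
    intro s
    have hinner : ⟪∑ n ∈ s, a n • ξ n, ∑ m ∈ s, a m • ξ m⟫
        = ((∑ n ∈ s, σ n * ‖a n‖ ^ 2 : ℝ) : ℂ) := by
      rw [sum_inner]
      have hterm : ∀ n ∈ s, ⟪a n • ξ n, ∑ m ∈ s, a m • ξ m⟫
          = ((σ n * ‖a n‖ ^ 2 : ℝ) : ℂ) := by
        intro n hns
        rw [inner_smul_left, inner_sum]
        have : ∑ m ∈ s, ⟪ξ n, a m • ξ m⟫ = (σ n : ℂ) * a n := by
          rw [Finset.sum_eq_single n]
          · rw [inner_smul_right, hξξ n n, if_pos rfl]; ring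
          · intro m hm hmn
            rw [inner_smul_right, hξξ n m, if_neg (fun h => hmn h.symm), mul_zero]
          · intro h; exact absurd hns h
        rw [this]
        have hconj : conj (a n) * a n = ((‖a n‖ ^ 2 : ℝ) : ℂ) := by
          rw [RCLike.conj_mul]
          norm_cast
        push_cast
        rw [show conj (a n) * ((σ n : ℂ) * a n) = (σ n : ℂ) * (conj (a n) * a n) by ring, hconj]
        push_cast
        ring
      rw [Finset.sum_congr rfl hterm]
      push_cast
      ring
    have := @norm_sq_eq_re_inner ℂ _ _ _ _ (∑ n ∈ s, a n • ξ n)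
    rw [this, hinner]
    exact RCLike.ofReal_re _
  -- bound ‖T z - w‖
  have hTzw : T z - w = ∑ n ∈ Λᶜ, a n • ξ n := by
    rw [hTz, hw, ← Finset.sum_compl_add_sum Λ (fun n => a n • ξ n)]
    abel
  have hstep2 : ‖T z - w‖ ≤ M * ‖z‖ := by
    have h1 : ‖T z - w‖ ^ 2 ≤ M ^ 2 * ‖z‖ ^ 2 := by
      rw [hTzw, hnormsum]
      calc ∑ n ∈ Λᶜ, σ n * ‖a n‖ ^ 2
          ≤ ∑ n ∈ Λᶜ, M ^ 2 * ‖a n‖ ^ 2 :=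
            Finset.sum_le_sum fun n hn => hkey n (Finset.mem_compl.mp hn)
        _ = M ^ 2 * ∑ n ∈ Λᶜ, ‖a n‖ ^ 2 := by rw [Finset.mul_sum]
        _ ≤ M ^ 2 * ∑ n, ‖a n‖ ^ 2 := by
            refine mul_le_mul_of_nonneg_left ?_ (sq_nonneg M)
            exact Finset.sum_le_sum_of_subset_of_nonneg (Finset.subset_univ _)
              (fun i _ _ => sq_nonneg _)
        _ ≤ M ^ 2 * ‖z‖ ^ 2 := by
            refine mul_le_mul_of_nonneg_left ?_ (sq_nonneg M)
            exact hv.sum_inner_products_le z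
    have h2 : ‖T z - w‖ ^ 2 ≤ (M * ‖z‖) ^ 2 := by rw [mul_pow]; exact h1
    calc ‖T z - w‖ = Real.sqrt (‖T z - w‖ ^ 2) := (Real.sqrt_sq (norm_nonneg _)).symm
      _ ≤ Real.sqrt ((M * ‖z‖) ^ 2) := Real.sqrt_le_sqrt h2
      _ = M * ‖z‖ := Real.sqrt_sq (mul_nonneg hM0 (norm_nonneg _))
  -- conclusion
  calc ‖f - P‖ ≤ ‖f - w‖ := hstep1
    _ = ‖(f - T z) + (T z - w)‖ := by abel_nf
    _ ≤ ‖f - T z‖ + ‖T z - w‖ := norm_add_le _ _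
    _ ≤ S + M * ‖z‖ := by rw [hS]; exact add_le_add le_rfl hstep2
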